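/- Let G be a finite abelian group and φ: G → G an endomorphism, making G a ℤ[x]-module with x acting as φ. Suppose F(x) ∈ ℤ[x] is monic with F(φ) = 0, and F factors as F = A·B in ℤ[x] with Res(A,B) coprime to #G. Then the map g ↦ (V·B(φ)(g), U·A(φ)(g)) gives a group isomorphism G ≅ G[A] × G[B], where G[A] = {g ∈ G : A(φ)(g) = 0} and similarly for G[B], and U, V ∈ ℤ[x] satisfy U·A + V·B ≡ 1 mod #G. -/

import Mathlib

open Polynomial

/-- The Sylvester matrix of two integer polynomials. -/
noncomputable def sylvesterMatrix (f g : Polynomial ℤ) :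
    Matrix (Fin (f.natDegree + g.natDegree)) (Fin (f.natDegree + g.natDegree)) ℤ :=
  Matrix.of fun i j =>
    if (i : ℕ) < g.natDegree then
      (if (i : ℕ) ≤ (j : ℕ) ∧ (j : ℕ) ≤ (i : ℕ) + f.natDegree then
        f.coeff (f.natDegree - ((j : ℕ) - (i : ℕ))) else 0)
    else
      (if (i : ℕ) - g.natDegree ≤ (j : ℕ) ∧ (j : ℕ) ≤ ((i : ℕ) - g.natDegree) + g.natDegree then
        g.coeff (g.natDegree - ((j : ℕ) - ((i : ℕ) - g.natDegree))) else 0)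

/-- The resultant of two integer polynomials, as the determinant of their Sylvester matrix. -/
noncomputable def polyResultant (f g : Polynomial ℤ) : ℤ := (sylvesterMatrix f g).det

open Finset in
private lemma rowSum (p : Polynomial ℤ) (s N : ℕ) (hs : s + p.natDegree < N) :
    ∑ j ∈ Finset.range N,
      (if s ≤ j ∧ j ≤ s + p.natDegree then C (p.coeff (p.natDegree - (j - s))) else 0)
        * X ^ (N - 1 - j) = X ^ (N - 1 - s - p.natDegree) * p := by
  set m := p.natDegree with hm
  have h1 : ∀ j ∈ Finset.range N,
      (if s ≤ j ∧ j ≤ s + m then C (p.coeff (m - (j - s))) else 0) * X ^ (N-1-j)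
      = if s ≤ j ∧ j ≤ s + m then C (p.coeff (m - (j - s))) * X ^ (N-1-j) else 0 := by
    intro j _; split <;> simp
  rw [Finset.sum_congr rfl h1, ← Finset.sum_filter]
  have h2 : (Finset.range N).filter (fun j => s ≤ j ∧ j ≤ s + m) = Finset.Icc s (s+m) := by
    ext j; simp only [Finset.mem_filter, Finset.mem_range, Finset.mem_Icc]; omega
  have h3 : Finset.Icc s (s+m) =
      Finset.map ⟨fun k => s + k, add_right_injective s⟩ (Finset.range (m+1)) := by
    ext j; simp only [Finset.mem_map, Finset.mem_Icc, Finset.mem_range,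
      Function.Embedding.coeFn_mk]
    constructor
    · intro hj; exact ⟨j - s, by omega, by omega⟩
    · rintro ⟨k, hk, rfl⟩; omega
  rw [h2, h3, Finset.sum_map]
  simp only [Function.Embedding.coeFn_mk, Nat.add_sub_cancel_left]
  have h4 : ∀ k ∈ Finset.range (m+1),
      C (p.coeff (m - k)) * X ^ (N - 1 - (s + k))
      = (fun k => C (p.coeff k) * X ^ (N - 1 - s - m + k)) (m + 1 - 1 - k) := by
    intro k hk
    simp only [Finset.mem_range] at hk
    have e1 : m - (m + 1 - 1 - k) = k := by omega
    have e2 : N - 1 - (s + k) = N - 1 - s - m + (m + 1 - 1 - k) := by omega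
    simp [e1, e2]
  rw [Finset.sum_congr rfl h4,
    Finset.sum_range_reflect (fun k => C (p.coeff k) * X ^ (N - 1 - s - m + k)) (m+1)]
  have h5 : p = ∑ i ∈ Finset.range (m+1), C (p.coeff i) * X ^ i := by
    simp only [C_mul_X_pow_eq_monomial]
    exact p.as_sum_range' (m+1) (by omega)
  conv_rhs => rw [h5, Finset.mul_sum]
  refine Finset.sum_congr rfl fun k hk => ?_
  rw [pow_add]; ring

open Finset in
private lemma resultant_mem (A B : Polynomial ℤ) (hN : 0 < A.natDegree + B.natDegree) :
    C (polyResultant A B) ∈ Ideal.span ({A, B} : Set (Polynomial ℤ)) := by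
  set m := A.natDegree
  set n := B.natDegree
  set N := m + n with hNdef
  set M : Matrix (Fin N) (Fin N) (Polynomial ℤ) :=
    (sylvesterMatrix A B).map (C : ℤ → Polynomial ℤ) with hM
  set v : Fin N → Polynomial ℤ := fun j => X ^ (N - 1 - (j : ℕ)) with hv
  have hMv : ∀ i : Fin N, M.mulVec v i ∈ Ideal.span ({A, B} : Set (Polynomial ℤ)) := by
    intro i
    have : M.mulVec v i = ∑ j : Fin N, M i j * v j := rfl
    rw [this]
    by_cases hi : (i : ℕ) < n
    · have key : ∑ j : Fin N, M i j * v j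
          = ∑ j ∈ Finset.range N,
            (if (i:ℕ) ≤ j ∧ j ≤ (i:ℕ) + m then C (A.coeff (m - (j - (i:ℕ)))) else 0)
              * X ^ (N - 1 - j) := by
        rw [← Fin.sum_univ_eq_sum_range]
        refine Finset.sum_congr rfl fun j _ => ?_
        simp only [hM, Matrix.map_apply, sylvesterMatrix, Matrix.of_apply, hi, if_true,
          ite_true, apply_ite (C : ℤ → Polynomial ℤ), map_zero, hv]
        rw [if_pos (show (i:ℕ) < B.natDegree from hi)]
      rw [key, rowSum A i N (by omega)]
      exact Ideal.mul_mem_left _ _ (Ideal.subset_span (by simp))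
    · have key : ∑ j : Fin N, M i j * v j
          = ∑ j ∈ Finset.range N,
            (if (i:ℕ) - n ≤ j ∧ j ≤ ((i:ℕ) - n) + n then C (B.coeff (n - (j - ((i:ℕ) - n)))) else 0)
              * X ^ (N - 1 - j) := by
        rw [← Fin.sum_univ_eq_sum_range]
        refine Finset.sum_congr rfl fun j _ => ?_
        simp only [hM, Matrix.map_apply, sylvesterMatrix, Matrix.of_apply, hi, if_false,
          ite_false, apply_ite (C : ℤ → Polynomial ℤ), map_zero, hv]
        rw [if_neg (show ¬ (i:ℕ) < B.natDegree from hi)]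
      rw [key, rowSum B ((i:ℕ) - n) N (by have := i.2; simp only [N, n, m] at this ⊢; omega)]
      exact Ideal.mul_mem_left _ _ (Ideal.subset_span (by simp))
  have t : Fin N := ⟨N - 1, by omega⟩
  have hdet : (Matrix.adjugate M).mulVec (M.mulVec v) = M.det • v := by
    rw [Matrix.mulVec_mulVec, Matrix.adjugate_mul, Matrix.smul_mulVec,
      Matrix.one_mulVec]
  have hmem : (Matrix.adjugate M).mulVec (M.mulVec v) ⟨N - 1, by omega⟩
      ∈ Ideal.span ({A, B} : Set (Polynomial ℤ)) := by
    have : (Matrix.adjugate M).mulVec (M.mulVec v) ⟨N - 1, by omega⟩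
        = ∑ j : Fin N, Matrix.adjugate M ⟨N - 1, by omega⟩ j * (M.mulVec v j) := rfl
    rw [this]
    exact Ideal.sum_mem _ fun j _ => Ideal.mul_mem_left _ _ (hMv j)
  rw [hdet] at hmem
  have hvt : v ⟨N - 1, by omega⟩ = 1 := by
    simp [hv]
  have hMdet : M.det = C (polyResultant A B) := by
    rw [hM, polyResultant]
    exact (RingHom.map_det (C : ℤ →+* Polynomial ℤ) (sylvesterMatrix A B)).symm
  simpa [hvt, hMdet, smul_eq_mul] using hmem

/-- if `F = A * B` is monic, kills the finite abelian group `G` (with `x` acting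
as the endomorphism `φ`), and `Res(A,B)` is coprime to `#G`, then `G ≅ G[A] × G[B]` via
`g ↦ (V·B(φ) g, U·A(φ) g)` where `U·A + V·B ≡ 1 mod #G`. -/
theorem stmt0 (G : Type*) [AddCommGroup G] [Fintype G] (φ : AddMonoid.End G)
    (F A B : Polynomial ℤ) (hmonic : F.Monic)
    (hF : Polynomial.aeval φ F = 0) (hAB : F = A * B)
    (hres : IsCoprime (polyResultant A B) (Fintype.card G : ℤ)) :
    ∃ U V W : Polynomial ℤ,
      U * A + V * B = 1 + Polynomial.C (Fintype.card G : ℤ) * W ∧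
      ∃ e : G ≃+
          (AddMonoidHom.ker (Polynomial.aeval φ A : AddMonoid.End G) ×
           AddMonoidHom.ker (Polynomial.aeval φ B : AddMonoid.End G)),
        ∀ g : G, ((e g).1 : G) = Polynomial.aeval φ (V * B) g ∧
                 ((e g).2 : G) = Polynomial.aeval φ (U * A) g := by
  obtain ⟨U, V, W, hBez⟩ :
      ∃ U V W : Polynomial ℤ,
        U * A + V * B = 1 + Polynomial.C (Fintype.card G : ℤ) * W := by
    by_cases hN : 0 < A.natDegree + B.natDegree
    · obtain ⟨P, Q, hPQ⟩ := Ideal.mem_span_pair.1 (resultant_mem A B hN)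
      obtain ⟨a, b, hab⟩ := hres
      refine ⟨C a * P, C a * Q, C (-b), ?_⟩
      calc C a * P * A + C a * Q * B = C a * (P * A + Q * B) := by ring
        _ = C (a * polyResultant A B) := by rw [hPQ, ← map_mul]
        _ = C (1 - b * (Fintype.card G : ℤ)) := by
              rw [show a * polyResultant A B = 1 - b * (Fintype.card G : ℤ) by linarith]
        _ = 1 + C (Fintype.card G : ℤ) * C (-b) := by
              rw [← map_mul, ← map_one (C : ℤ →+* Polynomial ℤ), ← map_add]
              congr 1; ring
    · have hA0 : A ≠ 0 := by
        rintro rfl; rw [zero_mul] at hAB; exact hmonic.ne_zero hAB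
      have hB0 : B ≠ 0 := by
        rintro rfl; rw [mul_zero] at hAB; exact hmonic.ne_zero hAB
      have hdeg : F.natDegree = 0 := by
        rw [hAB, Polynomial.natDegree_mul hA0 hB0]; omega
      have hF1 : F = 1 := hmonic.natDegree_eq_zero.1 hdeg
      refine ⟨B, 0, 0, ?_⟩
      rw [mul_comm, ← hAB, hF1]; ring
  -- key endomorphism facts
  have happly : ∀ (p q : Polynomial ℤ) (g : G),
      Polynomial.aeval φ (p * q) g = Polynomial.aeval φ p (Polynomial.aeval φ q g) := by
    intro p q g
    rw [map_mul]; rfl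
  have hcard : ∀ g : G, (Fintype.card G : ℤ) • g = 0 := by
    intro g; rw [natCast_zsmul, card_nsmul_eq_zero]
  have hone : ∀ g : G,
      Polynomial.aeval φ (U * A) g + Polynomial.aeval φ (V * B) g = g := by
    intro g
    have h0 := congrArg (fun p => Polynomial.aeval φ p g) hBez
    simp only [map_add, map_one] at h0
    have h1 : Polynomial.aeval φ (U * A) g + Polynomial.aeval φ (V * B) g
        = g + Polynomial.aeval φ (C (Fintype.card G : ℤ) * W) g := h0
    rw [happly (C (Fintype.card G : ℤ)) W g] at h1
    simp only [Polynomial.aeval_C, algebraMap_int_eq, eq_intCast, map_intCast,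
      AddMonoid.End.intCast_apply, hcard, map_zero, add_zero] at h1
    exact h1
  have hFkill : ∀ g : G, Polynomial.aeval φ F g = 0 := by
    intro g; rw [hF]; rfl
  have hA2 : ∀ g : G,
      Polynomial.aeval φ A (Polynomial.aeval φ (V * B) g) = 0 := by
    intro g
    rw [← happly]
    have : A * (V * B) = V * F := by rw [hAB]; ring
    rw [this, happly, hFkill, map_zero]
  have hB2 : ∀ g : G,
      Polynomial.aeval φ B (Polynomial.aeval φ (U * A) g) = 0 := by
    intro g
    rw [← happly]
    have : B * (U * A) = U * F := by rw [hAB]; ring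
    rw [this, happly, hFkill, map_zero]
  have hkillA : ∀ g : G, Polynomial.aeval φ A g = 0 →
      Polynomial.aeval φ (U * A) g = 0 := by
    intro g hg; rw [happly, hg, map_zero]
  have hkillB : ∀ g : G, Polynomial.aeval φ B g = 0 →
      Polynomial.aeval φ (V * B) g = 0 := by
    intro g hg; rw [happly, hg, map_zero]
  have hfixA : ∀ g : G, Polynomial.aeval φ A g = 0 →
      Polynomial.aeval φ (V * B) g = g := by
    intro g hg
    have := hone g
    rw [hkillA g hg, zero_add] at this; exact this
  have hfixB : ∀ g : G, Polynomial.aeval φ B g = 0 →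
      Polynomial.aeval φ (U * A) g = g := by
    intro g hg
    have := hone g
    rw [hkillB g hg, add_zero] at this; exact this
  refine ⟨U, V, W, hBez, ⟨{
    toFun := fun g => (⟨Polynomial.aeval φ (V * B) g, AddMonoidHom.mem_ker.2 (hA2 g)⟩,
                       ⟨Polynomial.aeval φ (U * A) g, AddMonoidHom.mem_ker.2 (hB2 g)⟩),
    invFun := fun x => (x.1 : G) + (x.2 : G),
    left_inv := fun g => by
      simp only []
      rw [add_comm]; exact hone g,
    right_inv := fun x => by
      obtain ⟨⟨x1, hx1⟩, ⟨x2, hx2⟩⟩ := x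
      replace hx1 : Polynomial.aeval φ A x1 = 0 := hx1
      replace hx2 : Polynomial.aeval φ B x2 = 0 := hx2
      refine Prod.ext (Subtype.ext ?_) (Subtype.ext ?_)
      · show Polynomial.aeval φ (V * B) (x1 + x2) = x1
        rw [map_add, hfixA x1 hx1, hkillB x2 hx2, add_zero]
      · show Polynomial.aeval φ (U * A) (x1 + x2) = x2
        rw [map_add, hkillA x1 hx1, hfixB x2 hx2, zero_add],
    map_add' := fun g h => by
      refine Prod.ext (Subtype.ext ?_) (Subtype.ext ?_) <;> simp [map_add] },
    fun g => ⟨rfl, rfl⟩⟩⟩
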